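/- Consider a heterogeneous game Γ(n,T,x,y,z) with y > 0 and z > 0. Let (T_1, T_2, T_3) be a partition of T into three nonempty sets, X_1 = ∑_{t∈T_1} x_t, X_2 = ∑_{t∈T_2} x_t, X_3 = ∑_{t∈T_3} x_t, and λ = ((n−1)·ζ − n·X_3)/(n·X_2 − 1). Then the strategy α* taking value 0 on T_1, value λ on T_2 and value 1 on T_3 is a symmetric Nash equilibrium with 0 < λ < 1 if and only if X_3 < (1 − 1/n)·ζ and X_1 < (1 − 1/n)·(1 − ζ). -/

import Mathlib

open Finset

noncomputable def U {T : Type*} [Fintype T] (n : ℕ) (x : T → ℝ) (y z : ℝ)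
    (α β : T → ℝ) : ℝ :=
  z * ∑ j, x j * β j +
    ∑ j, (x j / ((n : ℝ) - 1)) *
      (((n : ℝ) - 1) * y + (y + z) * β j - (n : ℝ) * (y + z) * ∑ i, x i * β i) * α j

def IsStrategy {T : Type*} (α : T → ℝ) : Prop :=
  ∀ t, α t ∈ Set.Icc (0 : ℝ) 1

def IsSymNash {T : Type*} [Fintype T] (n : ℕ) (x : T → ℝ) (y z : ℝ)
    (α : T → ℝ) : Prop :=
  IsStrategy α ∧ ∀ β : T → ℝ, IsStrategy β → U n x y z β α ≤ U n x y z α α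

theorem stmt13 {T : Type*} [Fintype T] [DecidableEq T] (hT : 2 ≤ Fintype.card T)
    (n : ℕ) (x : T → ℝ) (hx : ∑ t, x t = 1)
    (hxt : ∀ t : T, 1 < (n : ℝ) * x t ∧ (n : ℝ) * x t < n)
    (y z : ℝ) (hy : 0 < y) (hz : 0 < z)
    (T1 T2 T3 : Finset T) (hT1 : T1.Nonempty) (hT2 : T2.Nonempty) (hT3 : T3.Nonempty)
    (h12 : Disjoint T1 T2) (h13 : Disjoint T1 T3) (h23 : Disjoint T2 T3)
    (hcover : T1 ∪ T2 ∪ T3 = Finset.univ) :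
    (IsSymNash n x y z
        (fun t => if t ∈ T1 then 0
          else if t ∈ T2 then
            (((n : ℝ) - 1) * (y / (y + z)) - (n : ℝ) * ∑ t ∈ T3, x t) /
              ((n : ℝ) * ∑ t ∈ T2, x t - 1)
          else 1) ∧
      0 < (((n : ℝ) - 1) * (y / (y + z)) - (n : ℝ) * ∑ t ∈ T3, x t) /
            ((n : ℝ) * ∑ t ∈ T2, x t - 1) ∧
      (((n : ℝ) - 1) * (y / (y + z)) - (n : ℝ) * ∑ t ∈ T3, x t) /
            ((n : ℝ) * ∑ t ∈ T2, x t - 1) < 1) ↔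
    (∑ t ∈ T3, x t < (1 - 1 / (n : ℝ)) * (y / (y + z)) ∧
     ∑ t ∈ T1, x t < (1 - 1 / (n : ℝ)) * (1 - y / (y + z))) := by
  have hyz : 0 < y + z := by linarith
  set ζ : ℝ := y / (y + z) with hζ
  set X1 : ℝ := ∑ t ∈ T1, x t with hX1
  set X2 : ℝ := ∑ t ∈ T2, x t with hX2
  set X3 : ℝ := ∑ t ∈ T3, x t with hX3
  set lam : ℝ := (((n : ℝ) - 1) * ζ - ↑n * X3) / (↑n * X2 - 1) with hlam
  set αs : T → ℝ := fun t => if t ∈ T1 then 0 else if t ∈ T2 then lam else 1 with hαs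
  clear_value αs lam X1 X2 X3 ζ
  have hn1 : (1:ℝ) < n := by
    obtain ⟨t, ht⟩ := hT1
    have h := hxt t
    linarith [h.1, h.2]
  have hn0 : (0:ℝ) < n := by linarith
  have hxpos : ∀ t, 0 < x t := by
    intro t
    nlinarith [(hxt t).1, hn1]
  have hX2pos : 0 < (n:ℝ) * X2 - 1 := by
    obtain ⟨t, ht⟩ := hT2
    have h1 : x t ≤ X2 := by
      rw [hX2]; exact Finset.single_le_sum (fun i _ => (hxpos i).le) ht
    nlinarith [(hxt t).1, mul_le_mul_of_nonneg_left h1 hn0.le]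
  have hBne : ((n:ℝ) * X2 - 1) ≠ 0 := ne_of_gt hX2pos
  have hdU : Disjoint (T1 ∪ T2) T3 := Finset.disjoint_union_left.mpr ⟨h13, h23⟩
  have hsum : X1 + X2 + X3 = 1 := by
    rw [hX1, hX2, hX3, ← Finset.sum_union h12, ← Finset.sum_union hdU, hcover, hx]
  have hζpos : 0 < ζ := by rw [hζ]; exact div_pos hy hyz
  have hζ1 : ζ < 1 := by rw [hζ, div_lt_one hyz]; linarith
  have hzy : (y + z) * ζ = y := by rw [hζ]; field_simp
  have hmul : lam * ((n:ℝ) * X2 - 1) = ((n:ℝ) - 1) * ζ - ↑n * X3 := by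
    rw [hlam]; exact div_mul_cancel₀ _ hBne
  have hfact1 : (n:ℝ) * ((1 - 1/(n:ℝ)) * ζ) = ((n:ℝ) - 1) * ζ := by
    field_simp
  have hfact2 : (n:ℝ) * ((1 - 1/(n:ℝ)) * (1 - ζ)) = ((n:ℝ) - 1) * (1 - ζ) := by
    field_simp
  have key : (0 < lam ∧ lam < 1) ↔
      (X3 < (1 - 1/(n:ℝ)) * ζ ∧ X1 < (1 - 1/(n:ℝ)) * (1 - ζ)) := by
    constructor
    · rintro ⟨h1, h2⟩
      have hA : 0 < ((n:ℝ) - 1) * ζ - ↑n * X3 := by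
        rw [← hmul]; exact mul_pos h1 hX2pos
      have hB : ((n:ℝ) - 1) * ζ - ↑n * X3 < (n:ℝ) * X2 - 1 := by
        rw [← hmul]; nlinarith
      have hnsum : (n:ℝ) * X1 + n * X2 + n * X3 = n := by
        linear_combination (n:ℝ) * hsum
      constructor
      · rw [← mul_lt_mul_iff_right₀ hn0, hfact1]; linarith
      · rw [← mul_lt_mul_iff_right₀ hn0, hfact2]; linarith
    · rintro ⟨h1, h2⟩
      have hnsum : (n:ℝ) * X1 + n * X2 + n * X3 = n := by
        linear_combination (n:ℝ) * hsum
      rw [← mul_lt_mul_iff_right₀ hn0, hfact1] at h1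
      rw [← mul_lt_mul_iff_right₀ hn0, hfact2] at h2
      have hA : 0 < ((n:ℝ) - 1) * ζ - ↑n * X3 := by linarith
      have hB : ((n:ℝ) - 1) * ζ - ↑n * X3 < (n:ℝ) * X2 - 1 := by linarith
      rw [hlam]
      exact ⟨div_pos hA hX2pos, (div_lt_one hX2pos).mpr hB⟩
  have hv1 : ∀ t ∈ T1, αs t = 0 := by intro t ht; simp [hαs, ht]
  have hv2 : ∀ t ∈ T2, αs t = lam := by
    intro t ht
    have h1 : t ∉ T1 := Finset.disjoint_right.mp h12 ht
    simp [hαs, h1, ht]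
  have hv3 : ∀ t ∈ T3, αs t = 1 := by
    intro t ht
    have h1 : t ∉ T1 := Finset.disjoint_right.mp h13 ht
    have h2 : t ∉ T2 := Finset.disjoint_right.mp h23 ht
    simp [hαs, h1, h2]
  have hmem : ∀ t : T, t ∈ T1 ∨ t ∈ T2 ∨ t ∈ T3 := by
    intro t
    have h := Finset.mem_univ t
    rw [← hcover] at h
    simpa [Finset.mem_union, or_assoc] using h
  have hS : ∑ i, x i * αs i = lam * X2 + X3 := by
    have e1 : ∑ t ∈ T1, x t * αs t = 0 :=
      Finset.sum_eq_zero fun t ht => by rw [hv1 t ht, mul_zero]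
    have e2 : ∑ t ∈ T2, x t * αs t = lam * X2 := by
      rw [hX2, Finset.mul_sum]
      exact Finset.sum_congr rfl fun t ht => by rw [hv2 t ht]; ring
    have e3 : ∑ t ∈ T3, x t * αs t = X3 := by
      rw [hX3]
      exact Finset.sum_congr rfl fun t ht => by rw [hv3 t ht, mul_one]
    rw [← hcover, Finset.sum_union hdU, Finset.sum_union h12, e1, e2, e3]
    ring
  have nash : 0 < lam → lam < 1 → IsSymNash n x y z αs := by
    intro hl0 hl1
    have hkey : (n:ℝ) * (y + z) * (lam * X2 + X3) = ((n:ℝ) - 1) * y + (y + z) * lam := by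
      linear_combination (y + z) * hmul + ((n:ℝ) - 1) * hzy
    constructor
    · intro t
      rw [Set.mem_Icc, hαs]
      by_cases h1 : t ∈ T1 <;> by_cases h2 : t ∈ T2 <;>
        simp [h1, h2] <;> constructor <;> linarith
    · intro β hβ
      unfold U
      apply add_le_add_right
      apply Finset.sum_le_sum
      intro j _
      have hn1' : (0:ℝ) < (n:ℝ) - 1 := by linarith
      have hc : 0 < x j / ((n:ℝ) - 1) := div_pos (hxpos j) hn1'
      have hb := hβ j
      rw [Set.mem_Icc] at hb
      rw [hS, hkey]
      rcases hmem j with hj | hj | hj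
      · rw [hv1 j hj]
        have hK : ((n:ℝ) - 1) * y + (y + z) * (0:ℝ) - (((n:ℝ) - 1) * y + (y + z) * lam)
            = -((y + z) * lam) := by ring
        rw [hK]
        have hA : 0 ≤ x j / ((n:ℝ) - 1) * ((y + z) * lam) :=
          (mul_pos hc (mul_pos hyz hl0)).le
        have h1 := mul_le_mul_of_nonneg_left hb.1 hA
        rw [mul_zero] at h1
        nlinarith [h1]
      · rw [hv2 j hj]
        have hK : ((n:ℝ) - 1) * y + (y + z) * lam - (((n:ℝ) - 1) * y + (y + z) * lam)
            = 0 := by ring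
        rw [hK]
        simp
      · rw [hv3 j hj]
        have hK : ((n:ℝ) - 1) * y + (y + z) * (1:ℝ) - (((n:ℝ) - 1) * y + (y + z) * lam)
            = (y + z) * (1 - lam) := by ring
        rw [hK]
        have hA : 0 ≤ x j / ((n:ℝ) - 1) * ((y + z) * (1 - lam)) :=
          (mul_pos hc (mul_pos hyz (by linarith : (0:ℝ) < 1 - lam))).le
        exact mul_le_mul_of_nonneg_left hb.2 hA
  constructor
  · rintro ⟨_, h1, h2⟩
    exact key.mp ⟨h1, h2⟩
  · rintro h
    obtain ⟨h1, h2⟩ := key.mpr h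
    exact ⟨nash h1 h2, h1, h2⟩
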